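/- Let 𝓛 be a nonempty convex subset of a Coxeter group W and let τ_i be the noninvertible Bender–Knuth toggles defined with respect to 𝓛. For every u ∈ W and i ∈ I, we have Sep(τ_i(u)) ⊆ Sep(u). Moreover τ_i(u) = s_i u if Sep(s_i u) ⊆ Sep(u), and τ_i(u) = u otherwise. -/
import Mathlib


open scoped Classical

noncomputable section

namespace BKBilliards

variable {I : Type*} [Fintype I] [DecidableEq I]
variable {M : CoxeterMatrix I} {W : Type*} [Group W]

/-- The simple root indexed by `i`, i.e. the `i`-th standard basis vector of `ℝ^I`. -/
def sroot (i : I) : I → ℝ := Pi.single i 1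

/-- The data `(ρ, B)` constitutes the standard geometric representation of the Coxeter
system `cs`, together with its induced symmetric bilinear form (with `μ = 1` on all
pairs whose Coxeter matrix entry is `∞`, encoded as `0`). -/
structure IsGeometric (cs : CoxeterSystem M W) (ρ : Representation ℝ W (I → ℝ))
    (B : LinearMap.BilinForm ℝ (I → ℝ)) : Prop where
  /-- `B(αᵢ, αᵢ') = -cos (π / m i i')` when `m i i' ≠ ∞`. -/
  form_apply_of_ne_zero : ∀ i i' : I, M i i' ≠ 0 →
    B (sroot i) (sroot i') = - Real.cos (Real.pi / (M i i' : ℝ))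
  /-- `B(αᵢ, αᵢ') = -1` when `m i i' = ∞` (encoded as `0`). -/
  form_apply_of_eq_zero : ∀ i i' : I, M i i' = 0 → B (sroot i) (sroot i') = -1
  /-- Each simple reflection acts by the reflection formula. -/
  simple_apply : ∀ (i : I) (v : I → ℝ), ρ (cs.simple i) v = v - (2 * B v (sroot i)) • sroot i

variable (ρ : Representation ℝ W (I → ℝ))

/-- The root system `Φ = {w αᵢ : w ∈ W, i ∈ I}`. -/
def Phi : Set (I → ℝ) := {v | ∃ (w : W) (i : I), v = ρ w (sroot i)}

/-- The half-space `H_β⁺ = {w ∈ W : w β ∈ Φ⁺}`: for a root `β`, membership amounts to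
`w β` being a nonnegative combination of the simple roots. -/
def Hplus (β : I → ℝ) : Set W := {w : W | 0 ≤ ρ w β}

/-- `R(𝓛) = {β ∈ Φ : 𝓛 ⊆ H_β⁺}`. -/
def RL (L : Set W) : Set (I → ℝ) := {β | β ∈ Phi ρ ∧ ∀ w ∈ L, w ∈ Hplus ρ β}

/-- `𝓛` is convex if it equals the intersection of all half-spaces containing it. -/
def IsConvex (L : Set W) : Prop := ∀ u : W, (∀ β ∈ RL ρ L, u ∈ Hplus ρ β) → u ∈ L

/-- The set of separators of `u`: `Sep(u) = {β ∈ R(𝓛) : u β ∈ Φ⁻}`. -/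
def Sep (L : Set W) (u : W) : Set (I → ℝ) := {β | β ∈ RL ρ L ∧ ρ u β ≤ 0}

variable (cs : CoxeterSystem M W)

/-- The noninvertible Bender–Knuth toggle `τᵢ` associated to the convex set `𝓛`. -/
def toggle (L : Set W) (i : I) (u : W) : W :=
  if ρ u⁻¹ (sroot i) ∈ RL ρ L then u else cs.simple i * u

/-- For a word `𝗐 = i_M ⋯ i_1` (a list whose head is `i_M`), the composition
`τ_𝗐 = τ_{i_M} ⋯ τ_{i_1}`. -/
def toggleWord (L : Set W) (l : List I) (u : W) : W :=
  l.foldr (fun i v => toggle ρ cs L i v) u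

/-- `β` dominates `β'` if `H_β⁺ ⊇ H_{β'}⁺`. -/
def Dominates (β β' : I → ℝ) : Prop := Hplus ρ β' ⊆ Hplus ρ β

/-- A small root: a positive root dominating no positive root other than itself. -/
def IsSmall (β : I → ℝ) : Prop :=
  β ∈ Phi ρ ∧ 0 ≤ β ∧ ∀ β', β' ∈ Phi ρ → 0 ≤ β' → Dominates ρ β β' → β' = β

/-- `β` is a transmitting root of the stratum `Str(R)`:
`β ∈ R(𝓛)` and `β = -w⁻¹ αᵢ` for some `w` with `Sep(w) = R` and some `i ∈ I`. -/
def IsTransmitting (L : Set W) (R : Set (I → ℝ)) (β : I → ℝ) : Prop :=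
  β ∈ RL ρ L ∧ ∃ (w : W) (i : I), Sep ρ L w = R ∧ β = - ρ w⁻¹ (sroot i)

end BKBilliards

open BKBilliards

set_option linter.unusedSectionVars false

namespace BKAux

open CoxeterSystem

variable {I : Type*} [Fintype I] [DecidableEq I] {M : CoxeterMatrix I} {W : Type*} [Group W]
variable {cs : CoxeterSystem M W} {ρ : Representation ℝ W (I → ℝ)}
variable {B : LinearMap.BilinForm ℝ (I → ℝ)}

lemma sroot_nonneg (i : I) : (0 : I → ℝ) ≤ sroot i := by
  intro x
  by_cases hx : x = i <;> simp [sroot, Pi.single_apply, hx]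

lemma neg_sroot_nonpos (i : I) : -sroot i ≤ (0 : I → ℝ) := by
  intro x
  by_cases hx : x = i <;> simp [sroot, Pi.single_apply, hx]

lemma not_sroot_nonpos (i : I) : ¬ sroot i ≤ (0 : I → ℝ) := by
  intro h
  have := h i
  simp [sroot, Pi.single_apply] at this
  linarith

section

variable (hgeom : IsGeometric cs ρ B)
include hgeom

lemma B_diag (i : I) : B (sroot i) (sroot i) = 1 := by
  have h1 : M i i = 1 := M.diagonal i
  rw [hgeom.form_apply_of_ne_zero i i (by rw [h1]; exact one_ne_zero), h1]
  norm_num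

lemma B_pair_symm (i j : I) : B (sroot j) (sroot i) = B (sroot i) (sroot j) := by
  have hsym : M j i = M i j := M.isSymm.apply i j
  by_cases h : M i j = 0
  · rw [hgeom.form_apply_of_eq_zero i j h, hgeom.form_apply_of_eq_zero j i (by rw [hsym]; exact h)]
  · rw [hgeom.form_apply_of_ne_zero i j h, hgeom.form_apply_of_ne_zero j i (by rw [hsym]; exact h),
      hsym]

lemma rho_simple_self (i : I) : ρ (cs.simple i) (sroot i) = -sroot i := by
  rw [hgeom.simple_apply, B_diag hgeom]
  module

/-- The sequence of "sine ratio" coefficients for the dihedral computation. -/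
lemma exists_seq (i j : I) (hij : i ≠ j) :
    ∃ sq : ℕ → ℝ, sq 0 = 0 ∧ sq 1 = 1 ∧
      (∀ n : ℕ, sq (n + 2) = (-2 * B (sroot i) (sroot j)) * sq (n + 1) - sq n) ∧
      (∀ n : ℕ, (M i j = 0 ∨ n ≤ M i j) → 0 ≤ sq n) := by
  by_cases h : M i j = 0
  · refine ⟨fun n => (n : ℝ), by norm_num, by norm_num, ?_, ?_⟩
    · intro n
      rw [hgeom.form_apply_of_eq_zero i j h]
      push_cast; ring
    · intro n _; positivity
  · have hm2 : 2 ≤ M i j := by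
      have := M.off_diagonal i j hij
      omega
    set m : ℕ := M i j with hm
    have hmR : (2 : ℝ) ≤ (m : ℝ) := by exact_mod_cast hm2
    set θ : ℝ := Real.pi / m with hθ
    have hθpos : 0 < θ := by
      apply div_pos Real.pi_pos
      linarith
    have hθlt : θ < Real.pi := by
      rw [hθ, div_lt_iff₀ (by linarith : (0:ℝ) < (m:ℝ))]
      nlinarith [Real.pi_pos]
    have hsin : 0 < Real.sin θ := Real.sin_pos_of_pos_of_lt_pi hθpos hθlt
    refine ⟨fun n => Real.sin (n * θ) / Real.sin θ, by simp, ?_, ?_, ?_⟩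
    · simp [div_self (ne_of_gt hsin)]
    · intro n
      rw [hgeom.form_apply_of_ne_zero i j h, ← hm, ← hθ]
      have key : Real.sin (((n : ℝ) + 2) * θ)
          = 2 * Real.cos θ * Real.sin (((n : ℝ) + 1) * θ) - Real.sin ((n : ℝ) * θ) := by
        have e1 : ((n : ℝ) + 2) * θ = ((n : ℝ) + 1) * θ + θ := by ring
        have e2 : (n : ℝ) * θ = ((n : ℝ) + 1) * θ - θ := by ring
        rw [e1, e2, Real.sin_add, Real.sin_sub]; ring
      push_cast
      rw [key]
      field_simp
    · intro n hn
      have hn' : n ≤ m := by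
        rcases hn with h0 | h0
        · exact absurd h0 h
        · exact h0
      apply div_nonneg _ hsin.le
      apply Real.sin_nonneg_of_nonneg_of_le_pi
      · positivity
      · calc (n : ℝ) * θ ≤ (m : ℝ) * θ := by
              apply mul_le_mul_of_nonneg_right _ hθpos.le
              exact_mod_cast hn'
          _ = Real.pi := by
              rw [hθ]
              field_simp

lemma dihedral_formula (i j : I) {sq : ℕ → ℝ} {c : ℝ} (hs0 : sq 0 = 0) (hs1 : sq 1 = 1)
    (hrec : ∀ n : ℕ, sq (n + 2) = c * sq (n + 1) - sq n)
    (hci : c = -2 * B (sroot i) (sroot j)) (hcj : c = -2 * B (sroot j) (sroot i)) :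
    ∀ k : ℕ, ρ (cs.wordProd (alternatingWord i j k)) (sroot i) =
      (if Even k then sq (k + 1) else sq k) • sroot i +
      (if Even k then sq k else sq (k + 1)) • sroot j := by
  intro k
  induction k with
  | zero =>
    rw [show alternatingWord i j 0 = ([] : List I) from rfl, cs.wordProd_nil, map_one]
    simp [hs0, hs1]
  | succ k ih =>
    rw [alternatingWord_succ', cs.wordProd_cons, map_mul, Module.End.mul_apply, ih]
    by_cases hk : Even k
    · have hk1 : ¬ Even (k + 1) := by simp [Nat.even_add_one, hk]
      rw [if_pos hk, if_pos hk, if_pos hk, if_neg hk1, if_neg hk1]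
      rw [hgeom.simple_apply]
      have hB : B (sq (k + 1) • sroot i + sq k • sroot j) (sroot j)
          = sq (k + 1) * B (sroot i) (sroot j) + sq k := by
        simp [map_add, map_smul, B_diag hgeom]
      rw [hB, hrec k, hci]
      module
    · have hk1 : Even (k + 1) := Nat.even_add_one.mpr hk
      rw [if_neg hk, if_neg hk, if_neg hk, if_pos hk1, if_pos hk1]
      rw [hgeom.simple_apply]
      have hB : B (sq k • sroot i + sq (k + 1) • sroot j) (sroot i)
          = sq k + sq (k + 1) * B (sroot j) (sroot i) := by
        simp [map_add, map_smul, B_diag hgeom]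
      rw [hB, hrec k, hcj]
      module

lemma dihedral (i j : I) (hij : i ≠ j) (k : ℕ) (hk : M i j = 0 ∨ k < M i j) :
    ∃ a b : ℝ, 0 ≤ a ∧ 0 ≤ b ∧
      ρ (cs.wordProd (alternatingWord i j k)) (sroot i) = a • sroot i + b • sroot j := by
  obtain ⟨sq, hs0, hs1, hrec, hpos⟩ := exists_seq hgeom i j hij
  have hcj : (-2 * B (sroot i) (sroot j)) = -2 * B (sroot j) (sroot i) := by
    rw [B_pair_symm hgeom]
  have hks : ∀ n : ℕ, n ≤ k + 1 → 0 ≤ sq n := by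
    intro n hn
    apply hpos
    rcases hk with h | h
    · exact Or.inl h
    · exact Or.inr (by omega)
  refine ⟨_, _, ?_, ?_, dihedral_formula hgeom i j hs0 hs1 hrec rfl hcj k⟩
  · by_cases hk' : Even k
    · rw [if_pos hk']; exact hks _ (by omega)
    · rw [if_neg hk']; exact hks _ (by omega)
  · by_cases hk' : Even k
    · rw [if_pos hk']; exact hks _ (by omega)
    · rw [if_neg hk']; exact hks _ (by omega)

lemma peel : ∀ n : ℕ, ∀ w : W, cs.length w = n → ∀ i j : I, i ≠ j →
    ¬ cs.IsRightDescent w i → cs.IsRightDescent w j →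
    ∃ (v : W) (k : ℕ), 1 ≤ k ∧ w = v * cs.wordProd (alternatingWord i j k) ∧
      cs.length w = cs.length v + k ∧ ¬ cs.IsRightDescent v i ∧ ¬ cs.IsRightDescent v j := by
  intro n
  induction n using Nat.strong_induction_on with
  | _ n ih =>
    intro w hw i j hij hdi hdj
    have hlen' : cs.length (w * cs.simple j) + 1 = cs.length w := cs.isRightDescent_iff.mp hdj
    have hww : (w * cs.simple j) * cs.simple j = w := by
      rw [mul_assoc, cs.simple_mul_simple_self, mul_one]
    have hndj : ¬ cs.IsRightDescent (w * cs.simple j) j := by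
      intro hc
      unfold CoxeterSystem.IsRightDescent at hc
      rw [hww] at hc
      omega
    have halt1 : cs.wordProd (alternatingWord i j 1) = cs.simple j := by
      rw [show alternatingWord i j 1 = [j] from rfl, cs.wordProd_singleton]
    by_cases hdi' : cs.IsRightDescent (w * cs.simple j) i
    · obtain ⟨v, k, hk1, heq, hsum, hvj, hvi⟩ :=
        ih (cs.length (w * cs.simple j)) (by omega) (w * cs.simple j) rfl j i hij.symm hndj hdi'
      refine ⟨v, k + 1, by omega, ?_, by omega, hvi, hvj⟩
      rw [← hww, heq, alternatingWord_succ, cs.wordProd_concat, mul_assoc]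
    · refine ⟨w * cs.simple j, 1, le_refl 1, ?_, by omega, hdi', hndj⟩
      rw [halt1, hww]

lemma rho_pos : ∀ n : ℕ, ∀ w : W, cs.length w = n → ∀ i : I,
    ¬ cs.IsRightDescent w i → (0 : I → ℝ) ≤ ρ w (sroot i) := by
  intro n
  induction n using Nat.strong_induction_on with
  | _ n ih =>
    intro w hw i hdi
    rcases eq_or_ne w 1 with rfl | hne
    · rw [map_one, Module.End.one_apply]
      exact sroot_nonneg i
    · obtain ⟨j, hdj⟩ := cs.exists_rightDescent_of_ne_one hne
      have hij : i ≠ j := by rintro rfl; exact hdi hdj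
      obtain ⟨v, k, hk1, heq, hsum, hvi, hvj⟩ :=
        peel hgeom (cs.length w) w rfl i j hij hdi hdj
      have hredk : cs.length (cs.wordProd (alternatingWord i j k)) = k := by
        have h1 : cs.length (cs.wordProd (alternatingWord i j k)) ≤ k := by
          have := cs.length_wordProd_le (alternatingWord i j k)
          rwa [length_alternatingWord] at this
        have h2 : cs.length w ≤ cs.length v + cs.length (cs.wordProd (alternatingWord i j k)) := by
          rw [heq]; exact cs.length_mul_le v _
        omega
      have hklt : M i j = 0 ∨ k < M i j := by
        by_cases hm0 : M i j = 0
        · exact Or.inl hm0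
        right
        have hle : k ≤ M i j := by
          by_contra hgt
          exact cs.not_isReduced_alternatingWord i j hm0 (lt_of_not_ge hgt)
            (by unfold CoxeterSystem.IsReduced; rw [length_alternatingWord]; exact hredk)
        rcases lt_or_eq_of_le hle with h | heqk
        · exact h
        exfalso
        apply hdi
        have hbr : cs.wordProd (alternatingWord i j k) * cs.simple i
            = cs.wordProd (alternatingWord i j (k - 1)) := by
          have hb : cs.wordProd (alternatingWord i j (M i j))
              = cs.wordProd (alternatingWord j i (M i j)) := by
            have := cs.wordProd_braidWord_eq i j
            rwa [braidWord, braidWord, M.isSymm.apply i j] at this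
          have hk' : M i j = (k - 1) + 1 := by omega
          rw [heqk, hb, hk', alternatingWord_succ, cs.wordProd_concat, mul_assoc,
            cs.simple_mul_simple_self, mul_one]
          simp
        have : w * cs.simple i = v * cs.wordProd (alternatingWord i j (k - 1)) := by
          rw [heq, mul_assoc, hbr]
        unfold CoxeterSystem.IsRightDescent
        rw [this]
        calc cs.length (v * cs.wordProd (alternatingWord i j (k - 1)))
            ≤ cs.length v + cs.length (cs.wordProd (alternatingWord i j (k - 1))) :=
              cs.length_mul_le v _
          _ ≤ cs.length v + (k - 1) := by
              have := cs.length_wordProd_le (alternatingWord i j (k - 1))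
              rw [length_alternatingWord] at this
              omega
          _ < cs.length w := by omega
      obtain ⟨a, b, ha, hb, hform⟩ := dihedral hgeom i j hij k hklt
      have h1 : (0 : I → ℝ) ≤ ρ v (sroot i) := ih (cs.length v) (by omega) v rfl i hvi
      have h2 : (0 : I → ℝ) ≤ ρ v (sroot j) := ih (cs.length v) (by omega) v rfl j hvj
      rw [heq, map_mul, Module.End.mul_apply, hform, map_add, map_smul, map_smul]
      exact add_nonneg (smul_nonneg ha h1) (smul_nonneg hb h2)

lemma dichotomy (v : I → ℝ) (hv : v ∈ Phi ρ) : (0 : I → ℝ) ≤ v ∨ v ≤ 0 := by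
  obtain ⟨w, j, rfl⟩ := hv
  by_cases hd : cs.IsRightDescent w j
  · right
    have hww : w = (w * cs.simple j) * cs.simple j := by
      rw [mul_assoc, cs.simple_mul_simple_self, mul_one]
    have hnd : ¬ cs.IsRightDescent (w * cs.simple j) j := by
      intro hc
      unfold CoxeterSystem.IsRightDescent at hc
      rw [← hww] at hc
      have := cs.isRightDescent_iff.mp hd
      omega
    have hpos := rho_pos hgeom (cs.length (w * cs.simple j)) _ rfl j hnd
    rw [hww, map_mul, Module.End.mul_apply, rho_simple_self hgeom, map_neg]
    intro x
    simpa using hpos x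
  · left
    exact rho_pos hgeom (cs.length w) w rfl j hd

end

end BKAux

/-- `Sep(τᵢ(u)) ⊆ Sep(u)`; moreover `τᵢ(u) = sᵢu` if `Sep(sᵢu) ⊆ Sep(u)`
and `τᵢ(u) = u` otherwise. -/
theorem sep_toggle_subset
    {I : Type*} [Fintype I] [DecidableEq I] {M : CoxeterMatrix I} {W : Type*} [Group W]
    (cs : CoxeterSystem M W) (ρ : Representation ℝ W (I → ℝ))
    (B : LinearMap.BilinForm ℝ (I → ℝ)) (hgeom : IsGeometric cs ρ B)
    (L : Set W) (hL : L.Nonempty) (hconv : IsConvex ρ L)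
    (u : W) (i : I) :
    Sep ρ L (toggle ρ cs L i u) ⊆ Sep ρ L u ∧
    (Sep ρ L (cs.simple i * u) ⊆ Sep ρ L u → toggle ρ cs L i u = cs.simple i * u) ∧
    (¬ Sep ρ L (cs.simple i * u) ⊆ Sep ρ L u → toggle ρ cs L i u = u) := by
  classical
  have huu : ∀ x : I → ℝ, ρ u (ρ u⁻¹ x) = x := by
    intro x
    rw [← Module.End.mul_apply, ← map_mul, mul_inv_cancel, map_one, Module.End.one_apply]
  by_cases hR : ρ u⁻¹ (sroot i) ∈ RL ρ L
  · have ht : toggle ρ cs L i u = u := by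
      rw [toggle, if_pos hR]
    have hnot : ¬ Sep ρ L (cs.simple i * u) ⊆ Sep ρ L u := by
      intro hsub
      have hmem : ρ u⁻¹ (sroot i) ∈ Sep ρ L (cs.simple i * u) := by
        refine ⟨hR, ?_⟩
        have h1 : ρ (cs.simple i * u) (ρ u⁻¹ (sroot i)) = -sroot i := by
          rw [map_mul, Module.End.mul_apply, huu, BKAux.rho_simple_self hgeom]
        rw [h1]
        exact BKAux.neg_sroot_nonpos i
      have h2 := (hsub hmem).2
      rw [huu] at h2
      exact BKAux.not_sroot_nonpos i h2
    exact ⟨by rw [ht], fun hs => absurd hs hnot, fun _ => ht⟩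
  · have ht : toggle ρ cs L i u = cs.simple i * u := by
      rw [toggle, if_neg hR]
    have hsub : Sep ρ L (cs.simple i * u) ⊆ Sep ρ L u := by
      rintro β ⟨hβR, hβneg⟩
      refine ⟨hβR, ?_⟩
      set v := ρ u β with hv
      have hvPhi : v ∈ Phi ρ := by
        obtain ⟨w, t, hβ⟩ := hβR.1
        exact ⟨u * w, t, by rw [hv, hβ, map_mul, Module.End.mul_apply]⟩
      have hneg' : ρ (cs.simple i) v ≤ 0 := by
        rw [map_mul, Module.End.mul_apply] at hβneg
        exact hβneg
      by_contra hvle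
      have hcoord : ∀ x, x ≠ i → v x ≤ 0 := by
        intro x hx
        rw [hgeom.simple_apply] at hneg'
        have h := hneg' x
        simpa [sroot, Pi.single_apply, hx] using h
      have hge : (0 : I → ℝ) ≤ v := (BKAux.dichotomy hgeom v hvPhi).resolve_right hvle
      have hvi : 0 < v i := by
        by_contra h
        apply hvle
        intro x
        by_cases hx : x = i
        · subst hx; exact le_of_not_gt h
        · exact hcoord x hx
      have hveq : v = v i • sroot i := by
        funext x
        by_cases hx : x = i
        · subst hx; simp [sroot, Pi.single_apply]
        · have h1 := hcoord x hx
          have h2 := hge x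
          simp only [Pi.smul_apply, sroot, Pi.single_apply, if_neg hx, smul_eq_mul, mul_zero]
          exact le_antisymm h1 h2
      have hβeq : β = v i • ρ u⁻¹ (sroot i) := by
        have h3 : ρ u⁻¹ v = β := by
          rw [hv, ← Module.End.mul_apply, ← map_mul, inv_mul_cancel, map_one, Module.End.one_apply]
        rw [← h3]
        nth_rewrite 1 [hveq]
        rw [map_smul]
      apply hR
      refine ⟨⟨u⁻¹, i, rfl⟩, ?_⟩
      intro w hw
      have h0 := hβR.2 w hw
      have h0' : (0 : I → ℝ) ≤ v i • ρ w (ρ u⁻¹ (sroot i)) := by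
        rw [← map_smul, ← hβeq]
        exact h0
      intro x
      have hx := h0' x
      simp only [Pi.smul_apply, smul_eq_mul] at hx
      exact (mul_nonneg_iff_of_pos_left hvi).mp hx
    exact ⟨by rw [ht]; exact hsub, fun _ => ht, fun hns => absurd hsub hns⟩
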